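/- Let D be an m×n matrix over 𝔽₂. Suppose U is an invertible upper-triangular m×m matrix and V, V′ are invertible upper-triangular n×n matrices such that both R = U·D·V and R′ = D·V′ are reduced. Then for every column index j, column j of R is zero if and only if column j of R′ is zero, and whenever these columns are nonzero, low(R,j) = low(R′,j). (Equivalently: the persistence pairing determined by a reduced form of D does not change if, in the reduction process, one also performs row operations rowᵢ ← rowᵢ + rowⱼ with j > i, i.e. adding rows bottom-up.) -/

import Mathlib

open Matrix

/-- The `low` of column `j` of `R`: the largest row index `i` with `R i j ≠ 0`,
or `⊥` if the column is zero. -/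
def low {m n : ℕ} (R : Matrix (Fin m) (Fin n) (ZMod 2)) (j : Fin n) : WithBot (Fin m) :=
  (Finset.univ.filter fun i => R i j ≠ 0).max

/-- `R` is reduced if no two distinct nonzero columns have equal lows. -/
def Reduced {m n : ℕ} (R : Matrix (Fin m) (Fin n) (ZMod 2)) : Prop :=
  ∀ j₁ j₂ : Fin n, low R j₁ ≠ ⊥ → low R j₁ = low R j₂ → j₁ = j₂

/-- A square matrix is upper triangular if `V i j = 0` whenever `i > j`. -/
def UpperTri {k : ℕ} (V : Matrix (Fin k) (Fin k) (ZMod 2)) : Prop :=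
  ∀ i j : Fin k, j < i → V i j = 0

set_option linter.unusedSectionVars false

section Aux



variable {α β : Type*} [Fintype α] [LinearOrder α] [Fintype β] [DecidableEq β]

/-- generic low -/
def glow (M : Matrix α β (ZMod 2)) (b : β) : WithBot α :=
  (Finset.univ.filter fun a => M a b ≠ 0).max

lemma glow_ne_bot_iff (M : Matrix α β (ZMod 2)) (b : β) :
    glow M b ≠ ⊥ ↔ ∃ a, M a b ≠ 0 := by
  rw [glow, Ne, Finset.max_eq_bot, ← Ne, ← Finset.nonempty_iff_ne_empty]
  simp [Finset.Nonempty]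

lemma rank_eq_card_of_distinct_glows (M : Matrix α β (ZMod 2))
    (h : ∀ b₁ b₂ : β, glow M b₁ ≠ ⊥ → glow M b₁ = glow M b₂ → b₁ = b₂) :
    M.rank = (Finset.univ.filter fun b => glow M b ≠ ⊥).card := by
  classical
  set S := Finset.univ.filter fun b => glow M b ≠ ⊥ with hS
  set v : S → (α → ZMod 2) := fun b => Mᵀ (b : β) with hv
  have hli : LinearIndependent (ZMod 2) v := by
    rw [Fintype.linearIndependent_iff]
    intro g hg
    by_contra hcon
    push_neg at hcon
    obtain ⟨b₀, hb₀⟩ := hcon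
    set T : Finset S := Finset.univ.filter fun b => g b ≠ 0 with hT
    have hTne : T.Nonempty := ⟨b₀, by simp [hT, hb₀]⟩
    obtain ⟨bs, hbsT, hbsmax⟩ := T.exists_max_image (fun b => glow M (b : β)) hTne
    have hbs_ne : glow M (bs : β) ≠ ⊥ := (Finset.mem_filter.mp bs.2).2
    obtain ⟨a, ha⟩ : ∃ a : α, glow M (bs : β) = (a : WithBot α) := by
      cases hgb : glow M (bs : β) with
      | bot => exact absurd hgb hbs_ne
      | coe a => exact ⟨a, rfl⟩
    have haMem : M a (bs : β) ≠ 0 :=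
      (Finset.mem_filter.mp
        (Finset.mem_of_max (s := Finset.univ.filter fun x => M x (bs : β) ≠ 0) ha)).2
    have hsum := congrFun hg a
    rw [Finset.sum_apply] at hsum
    have hsingle : ∑ b : S, (g b • v b) a = g bs * M a (bs : β) := by
      rw [← Finset.sum_subset (Finset.subset_univ T)]
      · refine Finset.sum_eq_single_of_mem bs hbsT ?_
        intro b hbT hbne
        have hgb : g b ≠ 0 := (Finset.mem_filter.mp hbT).2
        have hlt : glow M (b : β) < (a : WithBot α) := by
          rw [← ha]
          refine lt_of_le_of_ne (hbsmax b hbT) ?_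
          intro heq
          exact hbne (Subtype.ext (h _ _ ((Finset.mem_filter.mp b.2).2) heq))
        have : M a (b : β) = 0 := by
          by_contra hMab
          have : (a : WithBot α) ≤ glow M (b : β) :=
            Finset.le_max (Finset.mem_filter.mpr ⟨Finset.mem_univ a, hMab⟩)
          exact absurd hlt (not_lt.mpr this)
        simp [hv, this]
      · intro b _ hbT
        have : g b = 0 := by
          by_contra hgb; exact hbT (Finset.mem_filter.mpr ⟨Finset.mem_univ b, hgb⟩)
        simp [this]
    rw [hsingle] at hsum
    rcases mul_eq_zero.mp hsum with h1 | h1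
    · exact (Finset.mem_filter.mp hbsT).2 h1
    · exact haMem h1
  have hspan : Submodule.span (ZMod 2) (Set.range Mᵀ) = Submodule.span (ZMod 2) (Set.range v) := by
    apply le_antisymm
    · rw [Submodule.span_le]
      rintro x ⟨b, rfl⟩
      by_cases hb : glow M b ≠ ⊥
      · exact Submodule.subset_span ⟨⟨b, Finset.mem_filter.mpr ⟨Finset.mem_univ b, hb⟩⟩, rfl⟩
      · push_neg at hb
        have hz : Mᵀ b = 0 := by
          funext a
          rw [glow, Finset.max_eq_bot, Finset.filter_eq_empty_iff] at hb
          simpa using hb (Finset.mem_univ a)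
        rw [hz]; exact Submodule.zero_mem _
    · rw [Submodule.span_le]
      rintro x ⟨b, rfl⟩
      exact Submodule.subset_span ⟨(b : β), rfl⟩
  rw [Matrix.rank_eq_finrank_span_cols]
  change Module.finrank (ZMod 2) (Submodule.span (ZMod 2) (Set.range Mᵀ)) = _
  rw [hspan, finrank_span_eq_card hli, Fintype.card_coe]



variable {m n : ℕ}

/-- lower-left submatrix -/
def subm (R : Matrix (Fin m) (Fin n) (ZMod 2)) (i : Fin m) (j : Fin n) :
    Matrix {a : Fin m // i ≤ a} {b : Fin n // b ≤ j} (ZMod 2) :=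
  R.submatrix Subtype.val Subtype.val

lemma glow_subm_ne_bot (R : Matrix (Fin m) (Fin n) (ZMod 2)) (i : Fin m) (j : Fin n)
    (b : {b : Fin n // b ≤ j}) :
    glow (subm R i j) b ≠ ⊥ ↔ (i : WithBot (Fin m)) ≤ low R (b : Fin n) := by
  constructor
  · intro h
    rw [glow, Ne, Finset.max_eq_bot, ← Ne, ← Finset.nonempty_iff_ne_empty] at h
    obtain ⟨a, ha⟩ := h
    have ha' : R (a : Fin m) (b : Fin n) ≠ 0 := (Finset.mem_filter.mp ha).2
    calc (i : WithBot (Fin m)) ≤ ((a : Fin m) : WithBot (Fin m)) := WithBot.coe_le_coe.mpr a.2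
    _ ≤ low R (b : Fin n) := Finset.le_max (Finset.mem_filter.mpr ⟨Finset.mem_univ _, ha'⟩)
  · intro h
    cases hl : low R (b : Fin n) with
    | bot => rw [hl] at h; exact absurd h (by simp)
    | coe a₀ =>
      rw [hl, WithBot.coe_le_coe] at h
      have ha₀ : R a₀ (b : Fin n) ≠ 0 := (Finset.mem_filter.mp (Finset.mem_of_max hl)).2
      rw [glow, Ne, Finset.max_eq_bot, ← Ne, ← Finset.nonempty_iff_ne_empty]
      exact ⟨⟨a₀, h⟩, Finset.mem_filter.mpr ⟨Finset.mem_univ _, ha₀⟩⟩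

lemma glow_subm_eq (R : Matrix (Fin m) (Fin n) (ZMod 2)) (i : Fin m) (j : Fin n)
    (b : {b : Fin n // b ≤ j}) (a : {a : Fin m // i ≤ a})
    (hab : glow (subm R i j) b = ↑a) : low R (b : Fin n) = ↑(a : Fin m) := by
  have haMem : R (a : Fin m) (b : Fin n) ≠ 0 :=
    (Finset.mem_filter.mp
      (Finset.mem_of_max (s := Finset.univ.filter fun x => subm R i j x b ≠ 0) hab)).2
  apply le_antisymm
  · rw [low, Finset.max_le_iff]
    intro x hx
    rw [WithBot.coe_le_coe]
    rcases le_total i x with hix | hxi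
    · have hxm : (⟨x, hix⟩ : {a : Fin m // i ≤ a}) ∈
          Finset.univ.filter fun y => subm R i j y b ≠ 0 :=
        Finset.mem_filter.mpr ⟨Finset.mem_univ _, (Finset.mem_filter.mp hx).2⟩
      have hle : ((⟨x, hix⟩ : {a : Fin m // i ≤ a}) : WithBot {a : Fin m // i ≤ a}) ≤
          glow (subm R i j) b := Finset.le_max hxm
      rw [hab, WithBot.coe_le_coe] at hle
      exact hle
    · exact le_trans hxi a.2
  · exact Finset.le_max (Finset.mem_filter.mpr ⟨Finset.mem_univ _, haMem⟩)

lemma subm_distinct (R : Matrix (Fin m) (Fin n) (ZMod 2)) (hR : Reduced R)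
    (i : Fin m) (j : Fin n) :
    ∀ b₁ b₂ : {b : Fin n // b ≤ j}, glow (subm R i j) b₁ ≠ ⊥ →
      glow (subm R i j) b₁ = glow (subm R i j) b₂ → b₁ = b₂ := by
  intro b₁ b₂ h1 heq
  obtain ⟨a, ha⟩ : ∃ a : {a : Fin m // i ≤ a}, glow (subm R i j) b₁ = ↑a := by
    cases hgb : glow (subm R i j) b₁ with
    | bot => exact absurd hgb h1
    | coe a => exact ⟨a, rfl⟩
  have e1 := glow_subm_eq R i j b₁ a ha
  have e2 := glow_subm_eq R i j b₂ a (heq ▸ ha)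
  exact Subtype.ext (hR _ _ (by rw [e1]; exact WithBot.coe_ne_bot) (e1.trans e2.symm))

lemma subm_count (R : Matrix (Fin m) (Fin n) (ZMod 2)) (i : Fin m) (j : Fin n) :
    (Finset.univ.filter fun b : {b : Fin n // b ≤ j} => glow (subm R i j) b ≠ ⊥).card =
    (Finset.univ.filter fun b : Fin n =>
      b ≤ j ∧ (i : WithBot (Fin m)) ≤ low R b).card := by
  refine Finset.card_bij' (fun b _ => (b : Fin n)) (fun b hb => ⟨b, ?_⟩) ?_ ?_ ?_ ?_
  · exact (Finset.mem_filter.mp hb).2.1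
  · intro b hb
    refine Finset.mem_filter.mpr ⟨Finset.mem_univ _, b.2, ?_⟩
    exact (glow_subm_ne_bot R i j b).mp (Finset.mem_filter.mp hb).2
  · intro b hb
    refine Finset.mem_filter.mpr ⟨Finset.mem_univ _, ?_⟩
    exact (glow_subm_ne_bot R i j _).mpr (Finset.mem_filter.mp hb).2.2
  · intro b _; rfl
  · intro b _; rfl



variable {m n : ℕ}

lemma sum_restrict {k : ℕ} (p : Fin k → Prop) [DecidablePred p] (f : Fin k → ZMod 2)
    (h : ∀ x, ¬ p x → f x = 0) : ∑ x, f x = ∑ x : Subtype p, f x := by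
  rw [← Finset.sum_subtype (Finset.univ.filter p) (by simp) f]
  exact (Finset.sum_filter_of_ne fun x _ hfx => by_contra fun hpx => hfx (h x hpx)).symm

/-- factorization of the lower-left submatrix of `U * D * V` -/
lemma subm_factor (D : Matrix (Fin m) (Fin n) (ZMod 2))
    (U : Matrix (Fin m) (Fin m) (ZMod 2)) (V : Matrix (Fin n) (Fin n) (ZMod 2))
    (hUt : UpperTri U) (hVt : UpperTri V) (i : Fin m) (j : Fin n) :
    (U * D * V).submatrix (Subtype.val : {a : Fin m // i ≤ a} → Fin m)
        (Subtype.val : {b : Fin n // b ≤ j} → Fin n) =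
      U.submatrix (Subtype.val : {a : Fin m // i ≤ a} → Fin m)
          (Subtype.val : {a : Fin m // i ≤ a} → Fin m) *
        D.submatrix (Subtype.val : {a : Fin m // i ≤ a} → Fin m)
          (Subtype.val : {b : Fin n // b ≤ j} → Fin n) *
        V.submatrix (Subtype.val : {b : Fin n // b ≤ j} → Fin n)
          (Subtype.val : {b : Fin n // b ≤ j} → Fin n) := by
  ext a b
  simp only [submatrix_apply, mul_apply]
  calc ∑ l : Fin n, (∑ k : Fin m, U (a : Fin m) k * D k l) * V l (b : Fin n)
      = ∑ l : {b : Fin n // b ≤ j}, (∑ k : Fin m, U (a : Fin m) k * D k (l : Fin n)) *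
          V (l : Fin n) (b : Fin n) := by
        apply sum_restrict
        intro l hl
        rw [hVt l b (lt_of_le_of_lt b.2 (not_le.mp hl)), mul_zero]
    _ = ∑ l : {b : Fin n // b ≤ j}, (∑ k : {a : Fin m // i ≤ a},
          U (a : Fin m) (k : Fin m) * D (k : Fin m) (l : Fin n)) * V (l : Fin n) (b : Fin n) := by
        congr 1
        funext l
        congr 1
        apply sum_restrict
        intro k hk
        rw [hUt a k (lt_of_lt_of_le (not_le.mp hk) a.2), zero_mul]

lemma isUnit_subm {k : ℕ} (W : Matrix (Fin k) (Fin k) (ZMod 2)) (p : Fin k → Prop)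
    [DecidablePred p] (hW : IsUnit W) (hWt : UpperTri W) :
    IsUnit (W.submatrix (Subtype.val : Subtype p → Fin k) (Subtype.val : Subtype p → Fin k)) := by
  have hbt : W.BlockTriangular id := fun a b h => hWt a b h
  have hdet : IsUnit W.det := W.isUnit_iff_isUnit_det.mp hW
  rw [Matrix.det_of_upperTriangular hbt] at hdet
  have hdiag : ∀ a, W a a ≠ 0 := by
    have := isUnit_iff_ne_zero.mp hdet
    rw [Finset.prod_ne_zero_iff] at this
    exact fun a => this a (Finset.mem_univ a)
  rw [Matrix.isUnit_iff_isUnit_det]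
  have hbt' : (W.submatrix (Subtype.val : Subtype p → Fin k) Subtype.val).BlockTriangular id :=
    fun a b h => hWt a b (by exact_mod_cast h)
  rw [Matrix.det_of_upperTriangular hbt']
  rw [isUnit_iff_ne_zero, Finset.prod_ne_zero_iff]
  exact fun a _ => hdiag a

lemma rank_unit_mul {α β : Type*} [Fintype α] [DecidableEq α] [Fintype β]
    (A : Matrix α α (ZMod 2)) (M : Matrix α β (ZMod 2)) (hA : IsUnit A) :
    (A * M).rank = M.rank := by
  have hdet : IsUnit A.det := A.isUnit_iff_isUnit_det.mp hA
  refine le_antisymm (Matrix.rank_mul_le_right A M) ?_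
  calc M.rank = (A⁻¹ * (A * M)).rank := by
        rw [← Matrix.mul_assoc, Matrix.nonsing_inv_mul A hdet, Matrix.one_mul]
    _ ≤ (A * M).rank := Matrix.rank_mul_le_right _ _

lemma rank_mul_unit_right {α β : Type*} [Fintype α] [Fintype β] [DecidableEq β]
    (M : Matrix α β (ZMod 2)) (B : Matrix β β (ZMod 2)) (hB : IsUnit B) :
    (M * B).rank = M.rank := by
  have hdet : IsUnit B.det := B.isUnit_iff_isUnit_det.mp hB
  refine le_antisymm (Matrix.rank_mul_le_left M B) ?_
  calc M.rank = ((M * B) * B⁻¹).rank := by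
        rw [Matrix.mul_assoc, Matrix.mul_nonsing_inv B hdet, Matrix.mul_one]
    _ ≤ (M * B).rank := Matrix.rank_mul_le_left _ _



lemma card_le_split {n : ℕ} (b : Fin n) (r : Fin n → Prop) [DecidablePred r] :
    (Finset.univ.filter fun x => x ≤ b ∧ r x).card =
      (Finset.univ.filter fun x => x < b ∧ r x).card + (if r b then 1 else 0) := by
  have hdisj : Disjoint (Finset.univ.filter fun x => x < b ∧ r x)
      (Finset.univ.filter fun x => x = b ∧ r x) := by
    rw [Finset.disjoint_left]
    rintro x hx1 hx2
    exact absurd ((Finset.mem_filter.mp hx2).2.1 ▸ (Finset.mem_filter.mp hx1).2.1) (lt_irrefl b)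
  have hsplit : (Finset.univ.filter fun x => x ≤ b ∧ r x) =
      (Finset.univ.filter fun x => x < b ∧ r x) ∪ (Finset.univ.filter fun x => x = b ∧ r x) := by
    ext x
    simp only [Finset.mem_union, Finset.mem_filter, Finset.mem_univ, true_and]
    constructor
    · rintro ⟨hle, hr⟩
      rcases lt_or_eq_of_le hle with h | h
      exacts [Or.inl ⟨h, hr⟩, Or.inr ⟨h, hr⟩]
    · rintro (⟨h, hr⟩ | ⟨h, hr⟩)
      exacts [⟨le_of_lt h, hr⟩, ⟨le_of_eq h, hr⟩]
  rw [hsplit, Finset.card_union_of_disjoint hdisj]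
  congr 1
  split_ifs with hrb
  · rw [Finset.card_eq_one]
    refine ⟨b, ?_⟩
    ext x
    simp only [Finset.mem_filter, Finset.mem_univ, true_and, Finset.mem_singleton]
    constructor
    · rintro ⟨rfl, _⟩; rfl
    · rintro rfl; exact ⟨rfl, hrb⟩
  · rw [Finset.card_eq_zero, Finset.filter_eq_empty_iff]
    rintro x _ ⟨rfl, hr⟩
    exact hrb hr

lemma filter_card_pointwise {n : ℕ} (p q : Fin n → Prop) [DecidablePred p] [DecidablePred q]
    (h : ∀ j : Fin n, (Finset.univ.filter fun b => b ≤ j ∧ p b).card =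
      (Finset.univ.filter fun b => b ≤ j ∧ q b).card) :
    ∀ b, p b ↔ q b := by
  suffices H : ∀ N : ℕ, ∀ b : Fin n, b.val < N → (p b ↔ q b) by
    exact fun b => H (b.val + 1) b (Nat.lt_succ_self _)
  intro N
  induction N with
  | zero => exact fun b hb => absurd hb (Nat.not_lt_zero _)
  | succ N ih =>
    intro b hb
    have IH : ∀ b' : Fin n, b' < b → (p b' ↔ q b') := by
      intro b' hb'
      exact ih b' (by omega)
    have hfil : (Finset.univ.filter fun x => x < b ∧ p x) =
        (Finset.univ.filter fun x => x < b ∧ q x) := by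
      apply Finset.filter_congr
      intro x _
      exact and_congr_right fun hx => IH x hx
    have hb' := h b
    rw [card_le_split b p, card_le_split b q, hfil] at hb'
    split_ifs at hb' with h1 h2 h2 <;> first | tauto | omega

end Aux

lemma upperTri_one {k : ℕ} : UpperTri (1 : Matrix (Fin k) (Fin k) (ZMod 2)) :=
  fun i j h => Matrix.one_apply_ne (ne_of_gt h)

lemma rank_subm_eq {m n : ℕ} (D : Matrix (Fin m) (Fin n) (ZMod 2))
    (U : Matrix (Fin m) (Fin m) (ZMod 2)) (V : Matrix (Fin n) (Fin n) (ZMod 2))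
    (hU : IsUnit U) (hUt : UpperTri U) (hV : IsUnit V) (hVt : UpperTri V)
    (i : Fin m) (j : Fin n) :
    (subm (U * D * V) i j).rank = (subm D i j).rank := by
  show ((U * D * V).submatrix _ _).rank = _
  rw [subm_factor D U V hUt hVt i j,
    rank_mul_unit_right _ _ (isUnit_subm V _ hV hVt),
    rank_unit_mul _ _ (isUnit_subm U _ hU hUt)]
  rfl

/-- pairing invariance under additional bottom-up row operations. -/
theorem stmt_0 {m n : ℕ} (D : Matrix (Fin m) (Fin n) (ZMod 2))
    (U : Matrix (Fin m) (Fin m) (ZMod 2)) (V V' : Matrix (Fin n) (Fin n) (ZMod 2))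
    (hU : IsUnit U) (hUt : UpperTri U)
    (hV : IsUnit V) (hVt : UpperTri V)
    (hV' : IsUnit V') (hV't : UpperTri V')
    (hR : Reduced (U * D * V)) (hR' : Reduced (D * V')) :
    ∀ j : Fin n, low (U * D * V) j = low (D * V') j := by
  intro j
  set R := U * D * V with hRdef
  set R' := D * V' with hR'def
  have hcount : ∀ (i : Fin m) (jj : Fin n),
      (Finset.univ.filter fun b => b ≤ jj ∧ (i : WithBot (Fin m)) ≤ low R b).card =
      (Finset.univ.filter fun b => b ≤ jj ∧ (i : WithBot (Fin m)) ≤ low R' b).card := by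
    intro i jj
    have h1 : (subm R i jj).rank = (subm D i jj).rank :=
      rank_subm_eq D U V hU hUt hV hVt i jj
    have h2 : (subm R' i jj).rank = (subm D i jj).rank := by
      have hone : R' = (1 : Matrix (Fin m) (Fin m) (ZMod 2)) * D * V' := by
        rw [Matrix.one_mul]
      rw [hone]
      exact rank_subm_eq D 1 V' isUnit_one upperTri_one hV' hV't i jj
    calc (Finset.univ.filter fun b => b ≤ jj ∧ (i : WithBot (Fin m)) ≤ low R b).card
        = (subm R i jj).rank := by
          rw [rank_eq_card_of_distinct_glows _ (subm_distinct R hR i jj)]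
          convert (subm_count R i jj).symm using 2
          exact Finset.filter_congr_decidable _ _ _
      _ = (subm R' i jj).rank := by rw [h1, h2]
      _ = _ := by
          rw [rank_eq_card_of_distinct_glows _ (subm_distinct R' hR' i jj)]
          convert subm_count R' i jj using 2
          exact Finset.filter_congr_decidable _ _ _
  have hiff : ∀ i : Fin m,
      ((i : WithBot (Fin m)) ≤ low R j ↔ (i : WithBot (Fin m)) ≤ low R' j) :=
    fun i => filter_card_pointwise _ _ (hcount i) j
  cases hl : low R j with
  | bot =>
    cases hl' : low R' j with
    | bot => rfl
    | coe a =>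
      have := (hiff a).mpr (by rw [hl'])
      rw [hl] at this
      exact absurd this (by simp)
  | coe a =>
    have h1 := (hiff a).mp (by rw [hl])
    cases hl' : low R' j with
    | bot => rw [hl'] at h1; exact absurd h1 (by simp)
    | coe a' =>
      have h2 := (hiff a').mpr (by rw [hl'])
      rw [hl'] at h1
      rw [hl] at h2
      rw [WithBot.coe_le_coe] at h1 h2
      rw [WithBot.coe_inj]
      exact le_antisymm h1 h2
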